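/- Let G be an additive group and U a nonprincipal ultrafilter on G closed under countable intersections. Let φ be a σ-additive state on ℓ∞(G) and let ψ be a state such that for every f ∈ ℓ∞(G) the function j ↦ φ(τ_j f) tends to ψ(f) along U. Then ψ is σ-additive: for every sequence (A_n)_{n∈ℕ} of pairwise disjoint subsets of G, ν_ψ(⋃_n A_n) = ∑'_n ν_ψ(A_n). -/

import Mathlib

open scoped ENNReal
open Filter

/-- The indicator function of `I` as an element of `ℓ∞(κ)`. -/
noncomputable def chi {κ : Type*} (I : Set κ) : lp (fun _ : κ => ℂ) ∞ :=
  ⟨I.indicator (fun _ => (1 : ℂ)), memℓp_infty ⟨1, by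
    rintro x ⟨i, rfl⟩
    by_cases h : i ∈ I <;> simp [Set.indicator, h]⟩⟩

/-- A state on `ℓ∞(κ)`: a continuous linear functional with `φ 1 = 1` that takes
nonnegative real values on functions with nonnegative real values. -/
structure IsState {κ : Type*} (φ : lp (fun _ : κ => ℂ) ∞ →L[ℂ] ℂ) : Prop where
  map_one : φ 1 = 1
  nonneg : ∀ f : lp (fun _ : κ => ℂ) ∞,
    (∀ i, ∃ r : ℝ, 0 ≤ r ∧ f i = r) → ∃ r : ℝ, 0 ≤ r ∧ φ f = r

/-- The translate `τ_j f`, `(τ_j f) i = f (i + j)`, as an element of `ℓ∞(G)`. -/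
noncomputable def tau {G : Type*} [AddGroup G] (j : G) (f : lp (fun _ : G => ℂ) ∞) :
    lp (fun _ : G => ℂ) ∞ :=
  ⟨fun i => f (i + j), memℓp_infty ⟨‖f‖, by
    rintro x ⟨i, rfl⟩
    exact lp.norm_apply_le_norm ENNReal.top_ne_zero f (i + j)⟩⟩


lemma chi_apply {κ : Type*} (I : Set κ) (i : κ) : chi I i = I.indicator (fun _ => (1:ℂ)) i := rfl

lemma tau_chi {G : Type*} [AddGroup G] (j : G) (A : Set G) :
    tau j (chi A) = chi ((· + j) ⁻¹' A) := by
  ext i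
  simp [tau, chi, Set.indicator]
  rfl

lemma chi_add_compl {κ : Type*} (I : Set κ) : chi I + chi Iᶜ = 1 := by
  ext i
  by_cases h : i ∈ I <;>
  simp [lp.coeFn_add, chi_apply, Set.indicator, h, lp.infty_coeFn_one]

lemma chi_nonneg_vals {κ : Type*} (I : Set κ) :
    ∀ i, ∃ r : ℝ, 0 ≤ r ∧ chi I i = r := by
  intro i
  by_cases h : i ∈ I
  · exact ⟨1, by norm_num, by simp [chi_apply, Set.indicator, h]⟩
  · exact ⟨0, le_refl _, by simp [chi_apply, Set.indicator, h]⟩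

lemma state_chi {κ : Type*} {φ : lp (fun _ : κ => ℂ) ∞ →L[ℂ] ℂ} (hφ : IsState φ)
    (I : Set κ) : ∃ r : ℝ, 0 ≤ r ∧ r ≤ 1 ∧ φ (chi I) = r := by
  obtain ⟨r, hr, hre⟩ := hφ.nonneg (chi I) (chi_nonneg_vals I)
  obtain ⟨s, hs, hse⟩ := hφ.nonneg (chi Iᶜ) (chi_nonneg_vals Iᶜ)
  have h1 : φ (chi I) + φ (chi Iᶜ) = 1 := by
    rw [← map_add, chi_add_compl, hφ.map_one]
  rw [hre, hse] at h1
  have : r + s = 1 := by exact_mod_cast h1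
  exact ⟨r, hr, by linarith, hre⟩

lemma chi_union {κ : Type*} {A B : Set κ} (h : Disjoint A B) :
    chi (A ∪ B) = chi A + chi B := by
  ext i
  by_cases hA : i ∈ A
  · have hB : i ∉ B := fun hB => (Set.disjoint_left.mp h hA) hB
    simp [lp.coeFn_add, chi_apply, Set.indicator, hA, hB]
  · by_cases hB : i ∈ B <;> simp [lp.coeFn_add, chi_apply, Set.indicator, hA, hB]

lemma state_chi_partial {κ : Type*} {φ : lp (fun _ : κ => ℂ) ∞ →L[ℂ] ℂ}
    (A : ℕ → Set κ) (hA : Pairwise (Function.onFun Disjoint A)) (N : ℕ) :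
    ∑ n ∈ Finset.range N, φ (chi (A n)) = φ (chi (⋃ n ∈ Finset.range N, A n)) := by
  induction N with
  | zero =>
      have h0 : chi (⋃ n ∈ Finset.range 0, A n) = 0 := by
        ext i; simp [chi_apply, lp.coeFn_zero]
      rw [Finset.sum_range_zero, h0, map_zero]
  | succ N ih =>
      rw [Finset.sum_range_succ, ih, Finset.range_add_one]
      rw [show (⋃ n ∈ insert N (Finset.range N), A n) = (⋃ n ∈ Finset.range N, A n) ∪ A N by
        simp [Set.biUnion_insert, Set.union_comm]]
      rw [chi_union, map_add]
      exact Set.disjoint_left.mpr fun a ha haN => by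
        obtain ⟨_, ⟨n, rfl⟩, _, ⟨hn, rfl⟩, han⟩ := ha
        exact Set.disjoint_left.mp (hA (by simp at hn; omega)) han haN

lemma summable_state_chi {κ : Type*} {φ : lp (fun _ : κ => ℂ) ∞ →L[ℂ] ℂ} (hφ : IsState φ)
    (A : ℕ → Set κ) (hA : Pairwise (Function.onFun Disjoint A)) (s : ℕ → ℝ)
    (hs0 : ∀ n, 0 ≤ s n) (hse : ∀ n, φ (chi (A n)) = s n) : Summable s := by
  refine summable_of_sum_range_le (c := 1) hs0 fun N => ?_
  obtain ⟨t, ht0, ht1, hte⟩ := state_chi hφ (⋃ n ∈ Finset.range N, A n)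
  have h := state_chi_partial (φ := φ) A hA N
  rw [hte] at h
  simp only [hse] at h
  rw [← Complex.ofReal_sum] at h
  have : ∑ n ∈ Finset.range N, s n = t := by exact_mod_cast h
  linarith

theorem stmt_2 {G : Type*} [AddGroup G] (U : Ultrafilter G)
    (hnonpr : ∀ A : Set G, A.Finite → A ∉ U)
    (hsigma : ∀ A : ℕ → Set G, (∀ n, A n ∈ U) → (⋂ n, A n) ∈ U)
    (φ ψ : lp (fun _ : G => ℂ) ∞ →L[ℂ] ℂ) (hφ : IsState φ) (hψ : IsState ψ)
    (hφσ : ∀ A : ℕ → Set G, Pairwise (Function.onFun Disjoint A) →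
      φ (chi (⋃ n, A n)) = ∑' n, φ (chi (A n)))
    (hlim : ∀ f : lp (fun _ : G => ℂ) ∞,
      Tendsto (fun j => φ (tau j f)) ↑U (nhds (ψ f))) :
    ∀ A : ℕ → Set G, Pairwise (Function.onFun Disjoint A) →
      ψ (chi (⋃ n, A n)) = ∑' n, ψ (chi (A n)) := by
  intro A hA
  choose r hr0 hr1 hre using fun n => state_chi hψ (A n)
  obtain ⟨rS, hrS0, hrS1, hrSe⟩ := state_chi hψ (⋃ n, A n)
  have hrsum : Summable r := summable_state_chi hψ A hA r hr0 hre
  set t : ℝ := ∑' n, r n with ht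
  have htsum : ∑' n, ψ (chi (A n)) = (t : ℂ) := by
    simp only [hre]
    exact (Complex.ofRealCLM.map_tsum hrsum).symm
  rw [hrSe, htsum]
  norm_cast
  -- key estimate
  have key : ∀ ε : ℝ, 0 < ε → |rS - t| ≤ 2 * ε := by
    intro ε hε
    set B : ℕ → Set G := fun n =>
      {j | dist (φ (tau j (chi (A n)))) (ψ (chi (A n))) < ε / 2 / 2 ^ n} with hB
    have hBmem : ∀ n, B n ∈ (U : Filter G) := by
      intro n
      exact (Metric.tendsto_nhds.mp (hlim (chi (A n)))) _ (by positivity)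
    set BU : Set G := {j | dist (φ (tau j (chi (⋃ n, A n)))) (ψ (chi (⋃ n, A n))) < ε} with hBU
    have hBUmem : BU ∈ (U : Filter G) :=
      (Metric.tendsto_nhds.mp (hlim (chi (⋃ n, A n)))) _ hε
    have hmem : (⋂ n, B n) ∩ BU ∈ (U : Filter G) :=
      Filter.inter_mem (hsigma B hBmem) hBUmem
    obtain ⟨j, hj⟩ := Filter.nonempty_of_mem hmem
    obtain ⟨hj1, hj2⟩ := hj
    -- translated sets
    set A' : ℕ → Set G := fun n => (· + j) ⁻¹' A n with hA'
    have hA'd : Pairwise (Function.onFun Disjoint A') := fun m n hmn => (hA hmn).preimage _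
    choose s hs0 hs1 hse using fun n => state_chi hφ (A' n)
    obtain ⟨sU, hsU0, hsU1, hsUe⟩ := state_chi hφ (⋃ n, A' n)
    have hssum : Summable s := summable_state_chi hφ A' hA'd s hs0 hse
    -- σ-additivity of φ for translated family
    have hφeq : (sU : ℂ) = ((∑' n, s n : ℝ) : ℂ) := by
      rw [← hsUe, hφσ A' hA'd]
      simp only [hse]
      exact (Complex.ofRealCLM.map_tsum hssum).symm
    have hsUeq : sU = ∑' n, s n := by exact_mod_cast hφeq
    -- union estimate
    have hUnion : (⋃ n, A' n) = (· + j) ⁻¹' (⋃ n, A n) := (Set.preimage_iUnion).symm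
    have hdistU : |sU - rS| ≤ ε := by
      have := hj2
      rw [hBU] at this
      simp only [Set.mem_setOf_eq] at this
      rw [tau_chi, ← hUnion, hsUe, hrSe, Complex.dist_eq, ← Complex.ofReal_sub,
        Complex.norm_real, Real.norm_eq_abs] at this
      exact this.le
    -- termwise estimates
    have hterm : ∀ n, |s n - r n| ≤ ε / 2 / 2 ^ n := by
      intro n
      have := hj1
      rw [Set.mem_iInter] at this
      have h := this n
      rw [hB] at h
      simp only [Set.mem_setOf_eq] at h
      rw [tau_chi, hse, hre, Complex.dist_eq, ← Complex.ofReal_sub,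
        Complex.norm_real, Real.norm_eq_abs] at h
      exact h.le
    have hwsum : Summable (fun n => ε / 2 / 2 ^ n) := summable_geometric_two' ε
    have hsub : Summable (fun n => s n - r n) := hssum.sub hrsum
    have hdiff : |∑' n, s n - t| ≤ ε := by
      rw [ht, ← Summable.tsum_sub hssum hrsum]
      calc |∑' n, (s n - r n)| ≤ ∑' n, |s n - r n| := by
            have := norm_tsum_le_tsum_norm (f := fun n => s n - r n)
              (by simpa using hsub.abs)
            simpa using this
        _ ≤ ∑' n, ε / 2 / 2 ^ n := Summable.tsum_le_tsum hterm hsub.abs hwsum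
        _ = ε := tsum_geometric_two' ε
    calc |rS - t| ≤ |rS - sU| + |sU - t| := abs_sub_le _ _ _
      _ ≤ ε + ε := add_le_add (by rw [abs_sub_comm]; exact hdistU) (hsUeq ▸ hdiff)
      _ = 2 * ε := by ring
  by_contra hne
  have hpos : 0 < |rS - t| := abs_pos.mpr (sub_ne_zero.mpr hne)
  have := key (|rS - t| / 4) (by linarith)
  linarith
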